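/- arXiv:2511.14568 — 4 statements merged into one kernel-verified Lean document; each statement's English description precedes it below -/
import Mathlib

section
/- Let f, g ∈ ℝ⟦X⟧ be delta series (i.e., each has zero constant coefficient and nonzero coefficient of X) such that f∘g = X and g∘f = X. Define A(n,k) := c_n(f^k/k!) and B(n,k) := c_n(g^k/k!) for n, k ∈ ℕ. Then for all natural numbers l ≤ n one has Σ_{k=l}^{n} A(n,k)·B(k,l) = δ_{n,l} and Σ_{k=l}^{n} B(n,k)·A(k,l) = δ_{n,l}, where δ_{n,l} is the Kronecker delta. -/
open PowerSeries Finset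

noncomputable section

/-- `cN n F = n! * (coefficient of X^n in F)`. -/
def cN (n : ℕ) (F : PowerSeries ℝ) : ℝ := (n.factorial : ℝ) * PowerSeries.coeff n F

/-- Formal substitution `F ∘ G` (faithful when `G` has zero constant coefficient). -/
def pcomp (F G : PowerSeries ℝ) : PowerSeries ℝ :=
  PowerSeries.mk fun n =>
    ∑ k ∈ Finset.range (n + 1), (PowerSeries.coeff k F) * (PowerSeries.coeff n (G ^ k))

/-- The formal series of log(1+X). -/
def L : PowerSeries ℝ := PowerSeries.mk fun n => if n = 0 then 0 else (-1 : ℝ) ^ (n - 1) / n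

/-- Falling factorial `(y)_m`. -/
def ff (y : ℝ) (m : ℕ) : ℝ := ∏ i ∈ Finset.range m, (y - i)

/-- Rising factorial `⟨y⟩_m`. -/
def rf (y : ℝ) (m : ℕ) : ℝ := ∏ i ∈ Finset.range m, (y + i)

/-- Degenerate falling factorial `(x)_{n,λ}`. -/
def ffl (x : ℝ) (n : ℕ) (lam : ℝ) : ℝ := ∏ i ∈ Finset.range n, (x - i * lam)

/-- Stirling numbers of the second kind. -/
def S2 (n k : ℕ) : ℝ :=
  (k.factorial : ℝ)⁻¹ * ∑ j ∈ Finset.range (k + 1), (-1 : ℝ) ^ (k - j) * (k.choose j) * (j : ℝ) ^ n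

/-- The falling factorial polynomial `x(x-1)⋯(x-n+1)`. -/
def fallingPoly (n : ℕ) : Polynomial ℝ := ∏ i ∈ Finset.range n, (Polynomial.X - Polynomial.C (i : ℝ))

/-- (Signed) Stirling numbers of the first kind. -/
def S1 (n k : ℕ) : ℝ := (fallingPoly n).coeff k

/-- Degenerate Stirling numbers of the second kind. -/
def S2d (lam : ℝ) (n k : ℕ) : ℝ :=
  (k.factorial : ℝ)⁻¹ *
    ∑ j ∈ Finset.range (k + 1), (-1 : ℝ) ^ (k - j) * (k.choose j) * ffl (j : ℝ) n lam

/-- Formal degenerate exponential `e_λ`. -/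
def degExp (lam : ℝ) : PowerSeries ℝ := PowerSeries.mk fun n => ffl 1 n lam / n.factorial

/-- Formal degenerate logarithm `Λ_λ` of `1+X`. -/
def degLog (lam : ℝ) : PowerSeries ℝ :=
  lam⁻¹ • PowerSeries.mk fun n => if n = 0 then 0 else ff lam n / n.factorial

/-- Degenerate Stirling numbers of the first kind. -/
def S1d (lam : ℝ) (n k : ℕ) : ℝ := cN n ((k.factorial : ℝ)⁻¹ • (degLog lam) ^ k)

/-- Binomial series `(1+X)^c`. -/
def binser (c : ℝ) : PowerSeries ℝ := PowerSeries.mk fun n => ff c n / n.factorial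

/-- Frobenius–Euler numbers of order `j`. -/
def FE (u : ℝ) (j n : ℕ) : ℝ :=
  cN n (((1 - u) • (PowerSeries.exp ℝ - PowerSeries.C u)⁻¹) ^ j)

lemma coeff_pow_zero' {h : PowerSeries ℝ} (h0 : PowerSeries.coeff 0 h = 0)
    {k n : ℕ} (hk : n < k) : PowerSeries.coeff n (h ^ k) = 0 := by
  have hx : PowerSeries.X ∣ h := by
    rw [PowerSeries.X_dvd_iff, ← PowerSeries.coeff_zero_eq_constantCoeff_apply]; exact h0
  have hd : PowerSeries.X ^ k ∣ h ^ k := pow_dvd_pow_of_dvd hx k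
  rw [PowerSeries.X_pow_dvd_iff] at hd
  exact hd n hk

lemma coeff_eval₂' (P : Polynomial ℝ) {h : PowerSeries ℝ}
    (h0 : PowerSeries.coeff 0 h = 0) (n : ℕ) :
    PowerSeries.coeff n (P.eval₂ PowerSeries.C h) =
      ∑ k ∈ Finset.range (n + 1), P.coeff k * PowerSeries.coeff n (h ^ k) := by
  set N := max (P.natDegree + 1) (n + 1) with hN
  have hd : P.natDegree < N := lt_of_lt_of_le (Nat.lt_succ_self _) (le_max_left _ _)
  rw [Polynomial.eval₂_eq_sum_range' PowerSeries.C hd h, map_sum]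
  have : ∀ k ∈ Finset.range N,
      PowerSeries.coeff n (PowerSeries.C (P.coeff k) * h ^ k)
        = P.coeff k * PowerSeries.coeff n (h ^ k) := fun k _ => by
    rw [PowerSeries.coeff_C_mul]
  rw [Finset.sum_congr rfl this]
  refine (Finset.sum_subset (Finset.range_subset_range.2 (le_max_right _ _)) ?_).symm
  intro k hk hk2
  simp only [Finset.mem_range, not_lt] at hk2
  rw [coeff_pow_zero' h0 (by omega), mul_zero]

lemma coeff_pcomp' (F : PowerSeries ℝ) {h : PowerSeries ℝ}
    (h0 : PowerSeries.coeff 0 h = 0) (n N : ℕ) (hn : n < N) :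
    PowerSeries.coeff n (pcomp F h) =
      PowerSeries.coeff n ((PowerSeries.trunc N F).eval₂ PowerSeries.C h) := by
  rw [coeff_eval₂' _ h0, pcomp, PowerSeries.coeff_mk]
  refine Finset.sum_congr rfl fun k hk => ?_
  rw [Finset.mem_range] at hk
  rw [PowerSeries.coeff_trunc, if_pos (by omega)]

lemma pcomp_mul' (F G : PowerSeries ℝ) {h : PowerSeries ℝ}
    (h0 : PowerSeries.coeff 0 h = 0) :
    pcomp (F * G) h = pcomp F h * pcomp G h := by
  ext n
  have e1 : PowerSeries.coeff n (pcomp (F * G) h)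
      = ∑ k ∈ Finset.range (n + 1),
          PowerSeries.coeff k (F * G) * PowerSeries.coeff n (h ^ k) := by
    rw [pcomp, PowerSeries.coeff_mk]
  have e2 : ∀ k ∈ Finset.range (n + 1), PowerSeries.coeff k (F * G)
      = (PowerSeries.trunc (n + 1) F * PowerSeries.trunc (n + 1) G : Polynomial ℝ).coeff k := by
    intro k hk
    rw [Finset.mem_range] at hk
    rw [PowerSeries.coeff_mul_eq_coeff_trunc_mul_trunc F G hk, ← Polynomial.coeff_coe,
      Polynomial.coe_mul]
  calc PowerSeries.coeff n (pcomp (F * G) h)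
      = ∑ k ∈ Finset.range (n + 1),
          (PowerSeries.trunc (n + 1) F * PowerSeries.trunc (n + 1) G : Polynomial ℝ).coeff k *
            PowerSeries.coeff n (h ^ k) := by
        rw [e1]; exact Finset.sum_congr rfl fun k hk => by rw [e2 k hk]
    _ = PowerSeries.coeff n
          ((PowerSeries.trunc (n + 1) F * PowerSeries.trunc (n + 1) G : Polynomial ℝ).eval₂
            PowerSeries.C h) := (coeff_eval₂' _ h0 n).symm
    _ = PowerSeries.coeff n
          ((PowerSeries.trunc (n + 1) F).eval₂ PowerSeries.C h *
            (PowerSeries.trunc (n + 1) G).eval₂ PowerSeries.C h) := by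
        rw [Polynomial.eval₂_mul]
    _ = PowerSeries.coeff n (pcomp F h * pcomp G h) := by
        rw [PowerSeries.coeff_mul, PowerSeries.coeff_mul]
        refine Finset.sum_congr rfl fun p hp => ?_
        rw [Finset.HasAntidiagonal.mem_antidiagonal] at hp
        rw [← coeff_pcomp' F h0 p.1 (n + 1) (by omega),
          ← coeff_pcomp' G h0 p.2 (n + 1) (by omega)]

lemma pcomp_one' {h : PowerSeries ℝ} : pcomp 1 h = 1 := by
  ext n
  rw [pcomp, PowerSeries.coeff_mk]
  rw [Finset.sum_eq_single 0]
  · simp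
  · intro k hk hk0
    rw [PowerSeries.coeff_one, if_neg hk0, zero_mul]
  · intro hk; simp at hk

lemma pcomp_pow' (G : PowerSeries ℝ) {h : PowerSeries ℝ}
    (h0 : PowerSeries.coeff 0 h = 0) (l : ℕ) :
    pcomp (G ^ l) h = (pcomp G h) ^ l := by
  induction l with
  | zero => simpa using pcomp_one'
  | succ l ih => rw [pow_succ, pow_succ, pcomp_mul' _ _ h0, ih]

lemma key_sum (f g : PowerSeries ℝ)
    (hf0 : PowerSeries.coeff 0 f = 0) (hg0 : PowerSeries.coeff 0 g = 0)
    (hgf : pcomp g f = PowerSeries.X) (n l : ℕ) (hl : l ≤ n) :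
    ∑ k ∈ Finset.Icc l n,
        PowerSeries.coeff k (g ^ l) * PowerSeries.coeff n (f ^ k)
      = if n = l then 1 else 0 := by
  have hX : pcomp (g ^ l) f = PowerSeries.X ^ l := by
    rw [pcomp_pow' g hf0 l, hgf]
  have := congrArg (PowerSeries.coeff n) hX
  rw [pcomp, PowerSeries.coeff_mk, PowerSeries.coeff_X_pow] at this
  rw [← this]
  refine Finset.sum_subset ?_ ?_
  · intro k hk
    rw [Finset.mem_Icc] at hk
    rw [Finset.mem_range]; omega
  · intro k hk hk2
    rw [Finset.mem_range] at hk
    rw [Finset.mem_Icc, not_and_or, not_le, not_le] at hk2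
    have hkl : k < l := by omega
    rw [coeff_pow_zero' hg0 hkl, zero_mul]

lemma final_aux (f g : PowerSeries ℝ)
    (hf0 : PowerSeries.coeff 0 f = 0) (hg0 : PowerSeries.coeff 0 g = 0)
    (hgf : pcomp g f = PowerSeries.X) (A B : ℕ → ℕ → ℝ)
    (hA : ∀ n k, A n k = cN n ((k.factorial : ℝ)⁻¹ • f ^ k))
    (hB : ∀ n k, B n k = cN n ((k.factorial : ℝ)⁻¹ • g ^ k))
    (n l : ℕ) (hl : l ≤ n) :
    (∑ k ∈ Finset.Icc l n, A n k * B k l) = (if n = l then (1 : ℝ) else 0) := by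
  have hterm : ∀ k, A n k * B k l
      = (n.factorial : ℝ) * (l.factorial : ℝ)⁻¹ *
        (PowerSeries.coeff k (g ^ l) * PowerSeries.coeff n (f ^ k)) := by
    intro k
    rw [hA, hB, cN, cN, map_smul, map_smul, smul_eq_mul, smul_eq_mul]
    have hk : ((k.factorial : ℝ)⁻¹) * (k.factorial : ℝ) = 1 := by
      rw [inv_mul_cancel₀]
      exact_mod_cast Nat.factorial_ne_zero k
    field_simp
  rw [Finset.sum_congr rfl fun k _ => hterm k, ← Finset.mul_sum,
    key_sum f g hf0 hg0 hgf n l hl]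
  by_cases h : n = l
  · subst h
    simp [mul_inv_cancel₀ (show (n.factorial : ℝ) ≠ 0 by exact_mod_cast Nat.factorial_ne_zero n)]
  · simp [h]

theorem stmt0 (f g : PowerSeries ℝ)
    (hf0 : PowerSeries.coeff 0 f = 0) (hf1 : PowerSeries.coeff 1 f ≠ 0)
    (hg0 : PowerSeries.coeff 0 g = 0) (hg1 : PowerSeries.coeff 1 g ≠ 0)
    (hfg : pcomp f g = PowerSeries.X) (hgf : pcomp g f = PowerSeries.X)
    (A B : ℕ → ℕ → ℝ)
    (hA : ∀ n k, A n k = cN n ((k.factorial : ℝ)⁻¹ • f ^ k))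
    (hB : ∀ n k, B n k = cN n ((k.factorial : ℝ)⁻¹ • g ^ k)) :
    ∀ n l : ℕ, l ≤ n →
      (∑ k ∈ Finset.Icc l n, A n k * B k l) = (if n = l then (1 : ℝ) else 0) ∧
      (∑ k ∈ Finset.Icc l n, B n k * A k l) = (if n = l then (1 : ℝ) else 0) := by
  intro n l hl
  exact ⟨final_aux f g hf0 hg0 hgf A B hA hB n l hl,
    final_aux g f hg0 hf0 hfg B A hB hA n l hl⟩
end
end

section
/- Let m be a positive integer and 0 < p ≤ 1 (binomial parameters). Set e := (1 + p·(Exp - 1))^m - 1 ∈ ℝ⟦X⟧ (the m-th ring power). Then for all natural numbers n ≥ k: c_n( e^k / k! ) = Σ_{j=k}^{n} Σ_{i=j}^{n} m^j·p^i·S₂(j,k)·S₁(i,j)·S₂(n,i). -/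
open PowerSeries Finset

noncomputable section

def T (k n : ℕ) : ℝ := ∑ j ∈ Finset.range (k + 1), (-1 : ℝ) ^ (k - j) * (k.choose j) * (j : ℝ) ^ n

lemma factorial_mul_S2 (n k : ℕ) : (k.factorial : ℝ) * S2 n k = T k n := by
  rw [S2, T, ← mul_assoc, mul_inv_cancel₀ (by exact_mod_cast k.factorial_ne_zero), one_mul]

lemma coeff_exp_sub_one_pow (k n : ℕ) :
    PowerSeries.coeff n ((PowerSeries.exp ℝ - 1) ^ k) = (n.factorial : ℝ)⁻¹ * T k n := by
  rw [sub_pow, map_sum, T, Finset.mul_sum]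
  refine Finset.sum_congr rfl fun j hj => ?_
  rw [Finset.mem_range] at hj
  have h1 : ((-1 : ℝ⟦X⟧)) ^ (j + k) = PowerSeries.C ((-1) ^ (j + k)) := by
    rw [map_pow, map_neg, map_one]
  have h2 : ((k.choose j : ℝ⟦X⟧)) = PowerSeries.C ((k.choose j : ℝ)) := by
    rw [map_natCast]
  rw [one_pow, mul_one, exp_pow_eq_rescale_exp, h1, h2, coeff_mul_C, coeff_C_mul,
    coeff_rescale, coeff_exp]
  have hsign : ((-1 : ℝ)) ^ (j + k) = (-1) ^ (k - j) := by
    have : j + k = (k - j) + 2 * j := by omega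
    rw [this, pow_add, pow_mul]; simp
  push_cast
  rw [hsign]
  field_simp

lemma T_eq_zero (n k : ℕ) (h : n < k) : T k n = 0 := by
  have hx : (PowerSeries.X : ℝ⟦X⟧) ^ k ∣ (PowerSeries.exp ℝ - 1) ^ k := by
    apply pow_dvd_pow_of_dvd
    rw [PowerSeries.X_dvd_iff]
    simp [PowerSeries.constantCoeff_exp]
  have h0 : PowerSeries.coeff n ((PowerSeries.exp ℝ - 1) ^ k) = 0 :=
    (PowerSeries.X_pow_dvd_iff.mp hx) n h
  rw [coeff_exp_sub_one_pow] at h0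
  have : (n.factorial : ℝ) ≠ 0 := by exact_mod_cast n.factorial_ne_zero
  field_simp at h0
  simpa using h0

lemma S2_eq_zero (n k : ℕ) (h : n < k) : S2 n k = 0 := by
  have := T_eq_zero n k h
  rw [← factorial_mul_S2] at this
  have hk : (k.factorial : ℝ) ≠ 0 := by exact_mod_cast k.factorial_ne_zero
  exact (mul_eq_zero.mp this).resolve_left hk

lemma ff_nat (N i : ℕ) : ff (N : ℝ) i = (N.descFactorial i : ℝ) := by
  induction i with
  | zero => simp [ff]
  | succ i ih =>
    rw [ff, Finset.prod_range_succ, ← ff, ih, Nat.descFactorial_succ]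
    by_cases h : N < i
    · rw [Nat.descFactorial_eq_zero_iff_lt.mpr h]
      simp
    · push_neg at h
      push_cast [Nat.cast_sub h]
      ring

lemma S1_sum (i : ℕ) (y : ℝ) :
    ∑ j ∈ Finset.range (i + 1), S1 i j * y ^ j = ff y i := by
  have hdeg : (fallingPoly i).natDegree < i + 1 := by
    have h1 : (fallingPoly i).natDegree ≤ i := by
      rw [fallingPoly]
      refine le_trans (Polynomial.natDegree_prod_le _ _) (le_trans (Finset.sum_le_sum
        (fun t _ => le_of_eq (Polynomial.natDegree_X_sub_C (t : ℝ)))) ?_)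
      simp
    omega
  have h := Polynomial.eval_eq_sum_range' hdeg y
  have h2 : (fallingPoly i).eval y = ff y i := by simp [fallingPoly, ff, Polynomial.eval_prod]
  rw [h2] at h
  unfold S1
  exact h.symm

lemma lemB (m k i : ℕ) (hki : k ≤ i) :
    ∑ j ∈ Finset.Icc k i, (m : ℝ) ^ j * S2 j k * S1 i j
      = (k.factorial : ℝ)⁻¹ * (i.factorial : ℝ)
        * (((1 + Polynomial.X) ^ m - 1 : Polynomial ℝ) ^ k).coeff i := by
  -- extend sum to range (i+1)
  have hext : ∑ j ∈ Finset.Icc k i, (m : ℝ) ^ j * S2 j k * S1 i j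
      = ∑ j ∈ Finset.range (i + 1), (m : ℝ) ^ j * S2 j k * S1 i j := by
    apply Finset.sum_subset
    · intro x hx; rw [Finset.mem_Icc] at hx; rw [Finset.mem_range]; omega
    · intro x hx hx'
      rw [Finset.mem_range] at hx; rw [Finset.mem_Icc] at hx'
      have : x < k := by omega
      rw [S2_eq_zero x k this]; ring
  rw [hext]
  -- unfold S2, swap sums
  have key : ∑ j ∈ Finset.range (i + 1), (m : ℝ) ^ j * S2 j k * S1 i j
      = (k.factorial : ℝ)⁻¹ * ∑ l ∈ Finset.range (k + 1),
          (-1 : ℝ) ^ (k - l) * (k.choose l) * ((m * l).descFactorial i : ℝ) := by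
    have step1 : ∀ j : ℕ, (m : ℝ) ^ j * S2 j k * S1 i j
        = ∑ l ∈ Finset.range (k + 1),
            (k.factorial : ℝ)⁻¹ * ((-1 : ℝ) ^ (k - l) * (k.choose l))
              * (S1 i j * (((m * l : ℕ) : ℝ)) ^ j) := by
      intro j
      rw [S2, Finset.mul_sum, Finset.mul_sum, Finset.sum_mul]
      refine Finset.sum_congr rfl fun l _ => ?_
      push_cast
      rw [mul_pow]
      ring
    simp only [step1]
    rw [Finset.sum_comm, Finset.mul_sum]
    refine Finset.sum_congr rfl fun l _ => ?_
    rw [← Finset.mul_sum, S1_sum, ff_nat]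
    ring
  rw [key]
  -- compute the polynomial coefficient
  have hcoeff : (((1 + Polynomial.X) ^ m - 1 : Polynomial ℝ) ^ k).coeff i
      = ∑ l ∈ Finset.range (k + 1), (-1 : ℝ) ^ (k - l) * (k.choose l) * ((m * l).choose i : ℝ) := by
    rw [sub_pow, Polynomial.finset_sum_coeff]
    refine Finset.sum_congr rfl fun l hl => ?_
    rw [Finset.mem_range] at hl
    rw [one_pow, mul_one, ← pow_mul]
    have h1 : ((-1 : Polynomial ℝ)) ^ (l + k) = Polynomial.C ((-1 : ℝ) ^ (l + k)) := by
      rw [map_pow, map_neg, map_one]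
    have h2 : ((k.choose l : Polynomial ℝ)) = Polynomial.C ((k.choose l : ℝ)) := by
      rw [map_natCast]
    rw [h1, h2, Polynomial.coeff_mul_C, Polynomial.coeff_C_mul, Polynomial.coeff_one_add_X_pow]
    have hsign : ((-1 : ℝ)) ^ (l + k) = (-1) ^ (k - l) := by
      have : l + k = (k - l) + 2 * l := by omega
      rw [this, pow_add, pow_mul]; simp
    rw [hsign]; ring
  rw [hcoeff, Finset.mul_sum, Finset.mul_sum]
  refine Finset.sum_congr rfl fun l _ => ?_
  rw [Nat.descFactorial_eq_factorial_mul_choose]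
  push_cast
  ring

theorem stmt3 (m : ℕ) (hm : 0 < m) (p : ℝ) (hp0 : 0 < p) (hp1 : p ≤ 1) (n k : ℕ)
    (hkn : k ≤ n) :
    cN n ((k.factorial : ℝ)⁻¹ • ((1 + p • (PowerSeries.exp ℝ - 1)) ^ m - 1) ^ k)
      = ∑ j ∈ Finset.Icc k n, ∑ i ∈ Finset.Icc j n,
          (m : ℝ) ^ j * p ^ i * S2 j k * S1 i j * S2 n i := by
  classical
  set P : Polynomial ℝ := (1 + Polynomial.X) ^ m - 1 with hP
  set G : ℝ⟦X⟧ := p • (PowerSeries.exp ℝ - 1) with hG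
  have hcomp : ((1 + p • (PowerSeries.exp ℝ - 1)) ^ m - 1) ^ k = Polynomial.aeval G (P ^ k) := by
    rw [hP]
    simp only [map_pow, map_sub, map_add, map_one, Polynomial.aeval_X]
    rfl
  set D := (P ^ k).natDegree with hD
  have hco : PowerSeries.coeff n (Polynomial.aeval G (P ^ k))
      = ∑ s ∈ Finset.range (D + 1), (P ^ k).coeff s * (p ^ s * ((n.factorial : ℝ)⁻¹ * T s n)) := by
    rw [Polynomial.aeval_eq_sum_range (x := G), map_sum]
    refine Finset.sum_congr rfl fun s _ => ?_
    rw [map_smul, smul_eq_mul, hG, smul_pow, map_smul, smul_eq_mul, coeff_exp_sub_one_pow]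
  rw [cN, hcomp, map_smul, smul_eq_mul, hco, Finset.mul_sum, Finset.mul_sum]
  set F : ℕ → ℝ := fun s => (n.factorial : ℝ) *
    ((k.factorial : ℝ)⁻¹ * ((P ^ k).coeff s * (p ^ s * ((n.factorial : ℝ)⁻¹ * T s n)))) with hF
  have hzero : ∀ s, s ∉ Finset.Icc k n → F s = 0 := by
    intro s hs
    rw [Finset.mem_Icc, not_and_or] at hs
    rcases hs with hs | hs
    · push_neg at hs
      have hcoeff0 : (P ^ k).coeff s = 0 := by
        obtain ⟨q, hq⟩ : (Polynomial.X : Polynomial ℝ) ^ k ∣ P ^ k := by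
          apply pow_dvd_pow_of_dvd
          rw [Polynomial.X_dvd_iff, hP]
          simp [Polynomial.coeff_one_add_X_pow]
        rw [hq, mul_comm, Polynomial.coeff_mul_X_pow', if_neg (by omega)]
      simp [hF, hcoeff0]
    · push_neg at hs
      simp [hF, T_eq_zero n s hs]
  have hsets : ∑ s ∈ Finset.range (D + 1), F s = ∑ s ∈ Finset.Icc k n, F s := by
    have h1 : ∑ s ∈ Finset.range (D + 1), F s = ∑ s ∈ Finset.range (max (D + 1) (n + 1)), F s := by
      apply Finset.sum_subset
      · intro x hx; rw [Finset.mem_range] at *; omega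
      · intro x hx hx'
        rw [Finset.mem_range] at hx'
        have : D < x := by omega
        simp [hF, Polynomial.coeff_eq_zero_of_natDegree_lt (lt_of_le_of_lt (le_refl _) this)]
    have h2 : ∑ s ∈ Finset.Icc k n, F s = ∑ s ∈ Finset.range (max (D + 1) (n + 1)), F s := by
      apply Finset.sum_subset
      · intro x hx; rw [Finset.mem_Icc] at hx; rw [Finset.mem_range]; omega
      · intro x _ hx'; exact hzero x hx'
    rw [h1, h2]
  rw [hsets]
  have hswap : ∑ j ∈ Finset.Icc k n, ∑ i ∈ Finset.Icc j n,
        (m : ℝ) ^ j * p ^ i * S2 j k * S1 i j * S2 n i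
      = ∑ i ∈ Finset.Icc k n, ∑ j ∈ Finset.Icc k i,
        (m : ℝ) ^ j * p ^ i * S2 j k * S1 i j * S2 n i := by
    simp only [← Finset.Ico_add_one_right_eq_Icc]
    exact Finset.sum_Ico_Ico_comm k (n + 1) _
  rw [hswap]
  refine Finset.sum_congr rfl fun i hi => ?_
  rw [Finset.mem_Icc] at hi
  have hik : k ≤ i := hi.1
  have hstep : ∑ j ∈ Finset.Icc k i, (m : ℝ) ^ j * p ^ i * S2 j k * S1 i j * S2 n i
      = (∑ j ∈ Finset.Icc k i, (m : ℝ) ^ j * S2 j k * S1 i j) * (p ^ i * S2 n i) := by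
    rw [Finset.sum_mul]
    exact Finset.sum_congr rfl fun j _ => by ring
  rw [hstep, lemB m k i hik, ← hP, hF]
  have hT : T i n = (i.factorial : ℝ) * S2 n i := (factorial_mul_S2 n i).symm
  simp only [hT]
  have hn0 : (n.factorial : ℝ) ≠ 0 := by exact_mod_cast n.factorial_ne_zero
  field_simp
end
end

section
/- Let 0 < p < 1 (geometric parameter) and set u := 1/(1-p). Set e := p·Exp·(1 - (1-p)·Exp)^{-1} - 1 ∈ ℝ⟦X⟧ (the series 1 - (1-p)·Exp has invertible constant coefficient p). Then for all natural numbers n ≥ k: c_n( e^k / k! ) = (1/(k!·(p-1)^k))·Σ_{j=0}^{k} binom(k,j)·(-1)^j·H_n^{(j)}(u). -/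
open PowerSeries Finset

noncomputable section

theorem stmt8 (p : ℝ) (hp0 : 0 < p) (hp1 : p < 1) (u : ℝ) (hu : u = 1 / (1 - p))
    (n k : ℕ) (hkn : k ≤ n) :
    cN n ((k.factorial : ℝ)⁻¹ •
        (p • PowerSeries.exp ℝ * (1 - (1 - p) • PowerSeries.exp ℝ)⁻¹ - 1) ^ k)
      = 1 / ((k.factorial : ℝ) * (p - 1) ^ k) *
          ∑ j ∈ Finset.range (k + 1), (k.choose j : ℝ) * (-1) ^ j * FE u j n := by
  have hp : (1 : ℝ) - p ≠ 0 := by linarith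
  have hup : (1 - p) * u = 1 := by rw [hu]; field_simp
  have hune : (1 : ℝ) - u ≠ 0 := by
    intro h
    have hu1 : u = 1 := by linarith
    rw [hu1, mul_one] at hup
    linarith
  set E : PowerSeries ℝ := PowerSeries.exp ℝ with hE
  set D : PowerSeries ℝ := E - PowerSeries.C u with hD
  have hccD : PowerSeries.constantCoeff D ≠ 0 := by
    rw [hD, hE]
    simp only [map_sub, PowerSeries.constantCoeff_exp, PowerSeries.constantCoeff_C]
    exact hune
  have hDinv : D * D⁻¹ = 1 := PowerSeries.mul_inv_cancel D hccD
  set G : PowerSeries ℝ := (1 - u) • D⁻¹ with hG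
  have hC : ((1 - p) • (PowerSeries.C u) : PowerSeries ℝ) = 1 := by
    rw [PowerSeries.smul_eq_C_mul, ← map_mul, hup, map_one]
  have h1 : (1 : PowerSeries ℝ) - (1 - p) • E = (-(1 - p)) • D := by
    rw [hD, smul_sub, neg_smul, neg_smul, sub_neg_eq_add, hC]
    abel
  have key : p • E * (1 - (1 - p) • E)⁻¹ - 1 = u • (G - 1) := by
    rw [h1, PowerSeries.smul_inv]
    have hE' : E = D + PowerSeries.C u := by rw [hD]; ring
    have hcoef : p * (-(1 - p))⁻¹ = 1 - u := by
      have hne : (-(1 - p) : ℝ) ≠ 0 := neg_ne_zero.mpr hp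
      rw [← div_eq_mul_inv, div_eq_iff hne, hu]
      field_simp
      ring
    calc p • E * ((-(1 - p))⁻¹ • D⁻¹) - 1
        = (p * (-(1 - p))⁻¹) • (E * D⁻¹) - 1 := by
          rw [smul_mul_assoc, mul_smul_comm, smul_smul]
      _ = (1 - u) • (1 + PowerSeries.C u * D⁻¹) - 1 := by
          rw [hE', add_mul, hDinv, hcoef]
      _ = u • (G - 1) := by
          rw [hG, smul_sub]
          simp only [PowerSeries.smul_eq_C_mul, map_sub, map_one]
          ring
  rw [key]
  have hpow : (u • (G - 1)) ^ k
      = ∑ m ∈ Finset.range (k + 1),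
          ((-1 : ℝ) ^ (m + k) * u ^ k * (k.choose m : ℝ)) • G ^ m := by
    rw [smul_pow, sub_pow, Finset.smul_sum]
    refine Finset.sum_congr rfl fun m hm => ?_
    rw [one_pow, mul_one]
    simp only [PowerSeries.smul_eq_C_mul, map_mul, map_pow, map_neg, map_one, map_natCast]
    ring
  rw [hpow]
  unfold cN
  rw [Finset.smul_sum, map_sum, Finset.mul_sum, Finset.mul_sum]
  have hpm1 : (p - 1 : ℝ) ≠ 0 := by intro h; apply hp; linarith
  have hu' : u = -(p - 1)⁻¹ := by rw [hu]; field_simp; ring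
  have huk : u ^ k = (-1 : ℝ) ^ k * ((p - 1) ^ k)⁻¹ := by
    rw [hu', neg_pow, inv_pow]
  refine Finset.sum_congr rfl fun m hm => ?_
  have hFE : FE u m n = (n.factorial : ℝ) * PowerSeries.coeff n (G ^ m) := rfl
  rw [smul_smul, PowerSeries.coeff_smul, smul_eq_mul, hFE, huk, one_div, mul_inv]
  have h5 : ((-1 : ℝ)) ^ (m + k) = (-1 : ℝ) ^ m * (-1 : ℝ) ^ k := pow_add (-1 : ℝ) m k
  have h6 : ((-1 : ℝ) ^ k) * ((-1 : ℝ) ^ k) = 1 := by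
    rw [← pow_add, ← two_mul, pow_mul]; norm_num
  rw [h5]
  linear_combination ((k.factorial : ℝ)⁻¹ * ((p - 1) ^ k)⁻¹ * (k.choose m : ℝ) *
    ((n.factorial : ℝ) * PowerSeries.coeff n (G ^ m)) * (-1 : ℝ) ^ m) * h6
end
end

section
/- Let b > 0 (uniform distribution on (0,b)). Set U := Σ_{n≥0} ( b^n/(n+1) )·X^n/n! ∈ ℝ⟦X⟧ (the formal series of (e^{bt}-1)/(bt)). Then for all natural numbers n ≥ k: c_n( (U-1)^k / k! ) = (b^n/k!)·Σ_{j=0}^{k} binom(k,j)·binom(n+j,j)^{-1}·(-1)^{k-j}·S₂(n+j,j). -/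
open PowerSeries Finset

noncomputable section

lemma neg_one_pow_add_eq_sub {i j : ℕ} (h : i ≤ j) : (-1 : ℝ) ^ (i + j) = (-1) ^ (j - i) := by
  have : i + j = (j - i) + 2 * i := by omega
  rw [this, pow_add, pow_mul]
  simp

lemma coeff_sub_pow_term (F : PowerSeries ℝ) (p i e c m : ℕ) :
    PowerSeries.coeff m ((-1 : PowerSeries ℝ) ^ p * F ^ i * (1 : PowerSeries ℝ) ^ e
        * (c : PowerSeries ℝ))
      = (-1 : ℝ) ^ p * c * PowerSeries.coeff m (F ^ i) := by
  have h1 : ((-1 : PowerSeries ℝ) ^ p * F ^ i * (1 : PowerSeries ℝ) ^ e * (c : PowerSeries ℝ))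
      = PowerSeries.C ((-1 : ℝ) ^ p * c) * F ^ i := by
    rw [one_pow, map_mul, map_pow, map_neg, map_one, map_natCast]
    ring
  rw [h1, PowerSeries.coeff_C_mul]

lemma coeff_Epow (b : ℝ) (i m : ℕ) :
    PowerSeries.coeff m ((PowerSeries.rescale b (PowerSeries.exp ℝ)) ^ i)
      = (b * i) ^ m / m.factorial := by
  rw [← map_pow, PowerSeries.exp_pow_eq_rescale_exp, PowerSeries.rescale_rescale,
    PowerSeries.coeff_rescale, PowerSeries.coeff_exp]
  push_cast
  rw [mul_comm (b := b)]
  ring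

lemma coeff_Esub1pow (b : ℝ) (j m : ℕ) :
    PowerSeries.coeff m ((PowerSeries.rescale b (PowerSeries.exp ℝ) - 1) ^ j)
      = b ^ m / m.factorial * (j.factorial * S2 m j) := by
  rw [sub_pow, map_sum]
  have : ∀ i ∈ Finset.range (j + 1),
      PowerSeries.coeff m
        ((-1 : PowerSeries ℝ) ^ (i + j) * (PowerSeries.rescale b (PowerSeries.exp ℝ)) ^ i
          * (1 : PowerSeries ℝ) ^ (j - i) * (j.choose i : PowerSeries ℝ))
        = b ^ m / m.factorial * ((-1 : ℝ) ^ (j - i) * (j.choose i) * (i : ℝ) ^ m) := by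
    intro i hi
    simp only [Finset.mem_range] at hi
    rw [coeff_sub_pow_term, coeff_Epow, neg_one_pow_add_eq_sub (Nat.lt_succ_iff.mp hi), mul_pow]
    ring
  rw [Finset.sum_congr rfl this, ← Finset.mul_sum, S2]
  congr 1
  rw [← mul_assoc, mul_inv_cancel₀ (by positivity), one_mul]

lemma key (b : ℝ) (hb : b ≠ 0) (n j : ℕ) :
    PowerSeries.coeff n ((PowerSeries.mk fun m => (b ^ m / (m + 1 : ℝ)) / m.factorial) ^ j)
      = b ^ n * (j.factorial : ℝ) * S2 (n + j) j / (n + j).factorial := by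
  set U : PowerSeries ℝ := PowerSeries.mk fun m => (b ^ m / (m + 1 : ℝ)) / m.factorial with hU
  have hE : PowerSeries.C b * (PowerSeries.X * U)
      = PowerSeries.rescale b (PowerSeries.exp ℝ) - 1 := by
    ext m
    rcases m with _ | m
    · rw [PowerSeries.coeff_C_mul, PowerSeries.coeff_zero_X_mul, map_sub,
        PowerSeries.coeff_rescale, PowerSeries.coeff_exp]
      simp
    · rw [PowerSeries.coeff_C_mul, PowerSeries.coeff_succ_X_mul, map_sub,
        PowerSeries.coeff_rescale, PowerSeries.coeff_exp, hU, PowerSeries.coeff_mk]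
      have h1 : PowerSeries.coeff (m + 1) (1 : PowerSeries ℝ) = 0 := by
        simp [PowerSeries.coeff_one]
      rw [h1, sub_zero]
      push_cast [Nat.factorial_succ]
      have hm : (m : ℝ) + 1 ≠ 0 := by positivity
      have hf : (m.factorial : ℝ) ≠ 0 := by positivity
      field_simp
      ring
  have h2 : (PowerSeries.rescale b (PowerSeries.exp ℝ) - 1) ^ j
      = PowerSeries.C (b ^ j) * (PowerSeries.X ^ j * U ^ j) := by
    rw [← hE, map_pow]; ring
  have h3 := congrArg (PowerSeries.coeff (n + j)) h2
  rw [coeff_Esub1pow, PowerSeries.coeff_C_mul, PowerSeries.coeff_X_pow_mul] at h3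
  have hbj : (b : ℝ) ^ j ≠ 0 := pow_ne_zero _ hb
  refine mul_left_cancel₀ hbj ?_
  rw [← h3, pow_add]
  ring

theorem stmt17' (b : ℝ) (hb : 0 < b) (n k : ℕ) (hkn : k ≤ n) :
    (n.factorial : ℝ) * PowerSeries.coeff n ((k.factorial : ℝ)⁻¹ •
        ((PowerSeries.mk fun m => (b ^ m / (m + 1 : ℝ)) / m.factorial) - 1) ^ k)
      = b ^ n / (k.factorial : ℝ) *
          ∑ j ∈ Finset.range (k + 1),
            (k.choose j : ℝ) * ((n + j).choose j : ℝ)⁻¹ * (-1 : ℝ) ^ (k - j) * S2 (n + j) j := by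
  rw [map_smul, smul_eq_mul, sub_pow, map_sum, Finset.mul_sum, Finset.mul_sum, Finset.mul_sum]
  refine Finset.sum_congr rfl fun j hj => ?_
  simp only [Finset.mem_range] at hj
  have hj' : j ≤ k := Nat.lt_succ_iff.mp hj
  rw [coeff_sub_pow_term, key b hb.ne' n j, neg_one_pow_add_eq_sub hj']
  have hch : ((n + j).choose j : ℝ) * n.factorial * j.factorial = (n + j).factorial := by
    exact_mod_cast Nat.add_choose_mul_factorial_mul_factorial n j
  have hchne : ((n + j).choose j : ℝ) ≠ 0 := by
    exact_mod_cast (Nat.choose_pos (Nat.le_add_left j n)).ne'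
  have hkf : (k.factorial : ℝ) ≠ 0 := by positivity
  have hnjf : ((n + j).factorial : ℝ) ≠ 0 := by positivity
  field_simp
  rw [← hch]
  ring

theorem stmt17 (b : ℝ) (hb : 0 < b) (n k : ℕ) (hkn : k ≤ n) :
    cN n ((k.factorial : ℝ)⁻¹ •
        ((PowerSeries.mk fun m => (b ^ m / (m + 1 : ℝ)) / m.factorial) - 1) ^ k)
      = b ^ n / (k.factorial : ℝ) *
          ∑ j ∈ Finset.range (k + 1),
            (k.choose j : ℝ) * ((n + j).choose j : ℝ)⁻¹ * (-1 : ℝ) ^ (k - j) * S2 (n + j) j :=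
  stmt17' b hb n k hkn
end
end
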